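/- Let d = {0,…,c−1}, let f : d^n → ℝ be non-negative, let C ⊆ d^n be a set of feasible decisions, let S := {p ∈ [0,1]^{n×c} : Σ_{r∈d} p_{i,r} = 1 for all i}, and let f̃ : S → ℝ be non-negative, entry-wise concave in the non-binary sense, and satisfy f̃(p) ≥ E_{X∼p} f(X) + β · Pr_{X∼p}[X ∉ C] for all p ∈ S, where β > max(f̃(p_init), max_{X ∈ C} f(X)) for a given p_init ∈ S. Then there exists a discrete (deterministic) decision X ∈ d^n with X ∈ C and f(X) ≤ f̃(p_init); in other words, derandomizing p_init by entry-wise local derandomizations yields a feasible solution whose objective value is at most f̃(p_init). -/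

import Mathlib

open Finset

/-- `Pr_p[X] = ∏_v p_{v, X_v}` for a non-binary decision `X : [n] → d`. -/
noncomputable def prMat {n c : ℕ} (p : Fin n → Fin c → ℝ) (X : Fin n → Fin c) : ℝ :=
  ∏ v, p v (X v)

/-- Local derandomization for non-binary decisions: row `i` of `p` is replaced by the
indicator of color `x`. -/
noncomputable def derMat {n c : ℕ} (p : Fin n → Fin c → ℝ) (i : Fin n) (x : Fin c) :
    Fin n → Fin c → ℝ :=
  Function.update p i (fun y => if y = x then 1 else 0)

lemma avg_pick {c : ℕ} (a g : Fin c → ℝ) (M : ℝ) (ha : ∀ r, 0 ≤ a r)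
    (hs : ∑ r, a r = 1) (h : ∑ r, a r * g r ≤ M) :
    ∃ r, a r ≠ 0 ∧ g r ≤ M := by
  by_contra hcon
  push_neg at hcon
  have hne : ∃ r, a r ≠ 0 := by
    by_contra h0
    push_neg at h0
    simp [h0] at hs
  obtain ⟨r0, hr0⟩ := hne
  have hlt : ∑ r, a r * M < ∑ r, a r * g r := by
    refine Finset.sum_lt_sum ?_ ?_
    · intro i _
      rcases eq_or_ne (a i) 0 with h0 | h0
      · simp [h0]
      · exact le_of_lt (mul_lt_mul_of_pos_left (hcon i h0) ((ha i).lt_of_ne (Ne.symm h0)))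
    · exact ⟨r0, mem_univ _,
        mul_lt_mul_of_pos_left (hcon r0 hr0) ((ha r0).lt_of_ne (Ne.symm hr0))⟩
  rw [← Finset.sum_mul, hs, one_mul] at hlt
  linarith

/-- non-binary derandomization guarantee: if `f` is non-negative, `f̃` is
non-negative and entry-wise concave (non-binary sense) on the set `S` of row-stochastic
matrices, `f̃(p) ≥ E_{X∼p} f(X) + β · Pr_{X∼p}[X ∉ C]` on `S`, and
`β > max(f̃(p_init), max_{X∈C} f(X))`, then there is a discrete decision `X ∈ C` with
`f(X) ≤ f̃(p_init)`. -/
theorem nonbinary_derandomization_guarantee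
    (n c : ℕ) (f : (Fin n → Fin c) → ℝ) (hf : ∀ X, 0 ≤ f X)
    (C : Finset (Fin n → Fin c))
    (ft : (Fin n → Fin c → ℝ) → ℝ) (β : ℝ)
    (hftnn : ∀ p : Fin n → Fin c → ℝ,
      (∀ v r, p v r ∈ Set.Icc (0 : ℝ) 1) → (∀ v, ∑ r, p v r = 1) → 0 ≤ ft p)
    (hconc : ∀ p : Fin n → Fin c → ℝ,
      (∀ v r, p v r ∈ Set.Icc (0 : ℝ) 1) → (∀ v, ∑ r, p v r = 1) →
      ∀ i : Fin n, ∑ r : Fin c, p i r * ft (derMat p i r) ≤ ft p)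
    (hub : ∀ p : Fin n → Fin c → ℝ,
      (∀ v r, p v r ∈ Set.Icc (0 : ℝ) 1) → (∀ v, ∑ r, p v r = 1) →
      (∑ X : Fin n → Fin c, prMat p X * f X)
        + β * (∑ X ∈ Finset.univ.filter (fun X : Fin n → Fin c => X ∉ C), prMat p X)
        ≤ ft p)
    (pinit : Fin n → Fin c → ℝ)
    (h1 : ∀ v r, pinit v r ∈ Set.Icc (0 : ℝ) 1) (h2 : ∀ v, ∑ r, pinit v r = 1)
    (hβ1 : ft pinit < β) (hβ2 : ∀ X ∈ C, f X < β) :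
    ∃ X : Fin n → Fin c, X ∈ C ∧ f X ≤ ft pinit := by
  have key : ∀ k, k ≤ n → ∃ p : Fin n → Fin c → ℝ,
      (∀ v r, p v r ∈ Set.Icc (0:ℝ) 1) ∧ (∀ v, ∑ r, p v r = 1) ∧
      ft p ≤ ft pinit ∧
      ∀ v : Fin n, (v:ℕ) < k → ∃ x, ∀ y, p v y = if y = x then 1 else 0 := by
    intro k
    induction k with
    | zero => exact fun _ => ⟨pinit, h1, h2, le_refl _,
        fun v hv => absurd hv (Nat.not_lt_zero _)⟩
    | succ k ih =>
      intro hk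
      obtain ⟨p, hp1, hp2, hp3, hp4⟩ := ih (Nat.le_of_succ_le hk)
      set i : Fin n := ⟨k, hk⟩ with hi
      obtain ⟨r, hr, hfr⟩ := avg_pick (p i) (fun r => ft (derMat p i r)) (ft p)
        (fun r => (hp1 i r).1) (hp2 i) (hconc p hp1 hp2 i)
      refine ⟨derMat p i r, ?_, ?_, le_trans hfr hp3, ?_⟩
      · intro v y
        by_cases hv : v = i
        · subst hv
          simp only [derMat, Function.update_self]
          split <;> norm_num
        · simpa [derMat, Function.update_of_ne hv] using hp1 v y
      · intro v
        by_cases hv : v = i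
        · subst hv
          simp [derMat]
        · simpa [derMat, Function.update_of_ne hv] using hp2 v
      · intro v hv
        by_cases hvi : v = i
        · subst hvi
          exact ⟨r, fun y => by simp [derMat]⟩
        · obtain ⟨x, hx⟩ := hp4 v (by
            have : (v:ℕ) ≠ k := fun h => hvi (Fin.ext h)
            omega)
          exact ⟨x, fun y => by simp [derMat, Function.update_of_ne hvi, hx]⟩
  obtain ⟨p, hp1, hp2, hp3, hp4⟩ := key n le_rfl
  choose X hX using fun v : Fin n => hp4 v v.isLt
  have hprX : prMat p X = 1 := by
    unfold prMat
    rw [Finset.prod_eq_one]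
    intro v _
    simp [hX v]
  have hprY : ∀ Y : Fin n → Fin c, Y ≠ X → prMat p Y = 0 := by
    intro Y hY
    obtain ⟨v, hv⟩ : ∃ v, Y v ≠ X v := Function.ne_iff.mp hY
    unfold prMat
    exact Finset.prod_eq_zero (mem_univ v) (by simp [hX v, hv])
  have hprnn : ∀ Y : Fin n → Fin c, 0 ≤ prMat p Y := by
    intro Y
    exact Finset.prod_nonneg fun v _ => (hp1 v (Y v)).1
  have hsum1 : (∑ Y : Fin n → Fin c, prMat p Y * f Y) = f X := by
    rw [Finset.sum_eq_single X]
    · rw [hprX, one_mul]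
    · intro Y _ hY; rw [hprY Y hY, zero_mul]
    · intro h; exact absurd (mem_univ X) h
  have hub' := hub p hp1 hp2
  rw [hsum1] at hub'
  have hβpos : 0 ≤ ft pinit := hftnn pinit h1 h2
  by_cases hXC : X ∈ C
  · refine ⟨X, hXC, ?_⟩
    have hS : (∑ Y ∈ Finset.univ.filter (fun Y : Fin n → Fin c => Y ∉ C), prMat p Y) = 0 := by
      refine Finset.sum_eq_zero ?_
      intro Y hY
      rw [Finset.mem_filter] at hY
      refine hprY Y fun h => ?_
      exact hY.2 (h ▸ hXC)
    rw [hS, mul_zero, add_zero] at hub'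
    exact le_trans hub' hp3
  · exfalso
    have hS : (1:ℝ) ≤ ∑ Y ∈ Finset.univ.filter (fun Y : Fin n → Fin c => Y ∉ C), prMat p Y := by
      rw [← hprX]
      exact Finset.single_le_sum (fun Y _ => hprnn Y)
        (Finset.mem_filter.mpr ⟨mem_univ X, hXC⟩)
    have hβpos' : 0 < β := lt_of_le_of_lt hβpos hβ1
    nlinarith [hf X, hp3]
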